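/- arXiv:2006.02313 — 3 statements merged into one kernel-verified Lean document; each statement's English description precedes it below -/
import Mathlib

section
/- Let M̂ and M̃ be symmetric positive definite real N×N matrices with M̂ entrywise non-negative, and suppose |[M̃]_{i,j} − [M̂]_{i,j}| ≤ σ [M̂]_{i,j} for all i,j and some σ ≥ 0. Then for every nonzero vector w, 1 − σ κ(M̂) ≤ (wᵀ M̃ w)/(wᵀ M̂ w) ≤ 1 + σ κ(M̂), where κ(M̂) = λ_max(M̂)/λ_min(M̂). -/
open Matrix

lemma rayleigh_eq_aux {N : ℕ} {A : Matrix (Fin N) (Fin N) ℝ} (hA : A.IsHermitian) (v : Fin N → ℝ) :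
    v ⬝ᵥ A *ᵥ v = ∑ i, hA.eigenvalues i *
        ((star (hA.eigenvectorUnitary : Matrix (Fin N) (Fin N) ℝ) *ᵥ v) i) ^ 2 ∧
    v ⬝ᵥ v = ∑ i, ((star (hA.eigenvectorUnitary : Matrix (Fin N) (Fin N) ℝ) *ᵥ v) i) ^ 2 := by
  set U := (hA.eigenvectorUnitary : Matrix (Fin N) (Fin N) ℝ) with hU
  set u := star U *ᵥ v with hu
  have hstar : star U = Uᵀ := by
    ext i j; simp [Matrix.star_apply]
  constructor
  · conv_lhs => rw [hA.spectral_theorem, Unitary.conjStarAlgAut_apply]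
    rw [Matrix.mul_assoc, ← Matrix.mulVec_mulVec, ← Matrix.mulVec_mulVec,
      Matrix.dotProduct_mulVec, ← Matrix.mulVec_transpose, ← hstar, ← hu]
    have : (diagonal (RCLike.ofReal ∘ hA.eigenvalues)) *ᵥ u = fun i => hA.eigenvalues i * u i := by
      ext i; simp [Matrix.mulVec_diagonal]
    rw [this]
    simp [dotProduct, sq, mul_comm, mul_assoc, mul_left_comm]
  · have : u ⬝ᵥ u = v ⬝ᵥ v := by
      rw [hu, Matrix.dotProduct_mulVec, ← Matrix.mulVec_transpose, hstar,
        Matrix.transpose_transpose, Matrix.mulVec_mulVec, ← hstar,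
        Matrix.mem_unitaryGroup_iff.mp hA.eigenvectorUnitary.2, Matrix.one_mulVec]
    rw [← this]; simp [dotProduct, sq]

lemma rayleigh_bounds_aux {N : ℕ} {A : Matrix (Fin N) (Fin N) ℝ} (hA : A.IsHermitian)
    (v : Fin N → ℝ) {a b : ℝ} (ha : ∀ i, a ≤ hA.eigenvalues i) (hb : ∀ i, hA.eigenvalues i ≤ b) :
    a * (v ⬝ᵥ v) ≤ v ⬝ᵥ A *ᵥ v ∧ v ⬝ᵥ A *ᵥ v ≤ b * (v ⬝ᵥ v) := by
  obtain ⟨h1, h2⟩ := rayleigh_eq_aux hA v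
  rw [h1, h2, Finset.mul_sum, Finset.mul_sum]
  constructor
  · exact Finset.sum_le_sum fun i _ =>
      mul_le_mul_of_nonneg_right (ha i) (sq_nonneg _)
  · exact Finset.sum_le_sum fun i _ =>
      mul_le_mul_of_nonneg_right (hb i) (sq_nonneg _)

/-- Entrywise perturbation bound for generalized Rayleigh quotients: if
`|[M̃]_{ij} − [M̂]_{ij}| ≤ σ [M̂]_{ij}` with `M̂` SPD entrywise non-negative, then for every
nonzero `w`, `1 − σ κ(M̂) ≤ (wᵀ M̃ w)/(wᵀ M̂ w) ≤ 1 + σ κ(M̂)`. -/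
theorem rayleigh_perturbation {N : ℕ}
    (Mh Mt : Matrix (Fin N) (Fin N) ℝ) (hMh : Mh.PosDef) (hMt : Mt.PosDef)
    (hnn : ∀ i j, 0 ≤ Mh i j) (σ : ℝ) (hσ : 0 ≤ σ)
    (hpert : ∀ i j, |Mt i j - Mh i j| ≤ σ * Mh i j) :
    ∀ w : Fin N → ℝ, w ≠ 0 →
      1 - σ * (sSup (spectrum ℝ Mh) / sInf (spectrum ℝ Mh)) ≤
          (w ⬝ᵥ Mt.mulVec w) / (w ⬝ᵥ Mh.mulVec w) ∧
      (w ⬝ᵥ Mt.mulVec w) / (w ⬝ᵥ Mh.mulVec w) ≤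
          1 + σ * (sSup (spectrum ℝ Mh) / sInf (spectrum ℝ Mh)) := by
  intro w hw
  obtain ⟨i0, hi0⟩ : ∃ i, w i ≠ 0 := Function.ne_iff.mp hw
  haveI : Nonempty (Fin N) := ⟨i0⟩
  have hherm := hMh.1
  set lam := hherm.eigenvalues with hlam
  have hspec : spectrum ℝ Mh = Set.range lam := hherm.spectrum_real_eq_range_eigenvalues
  set a := sInf (spectrum ℝ Mh) with haa
  set b := sSup (spectrum ℝ Mh) with hbb
  have hfin : (Set.range lam).Finite := Set.finite_range lam
  have hne : (Set.range lam).Nonempty := Set.range_nonempty lam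
  have ha_mem : a ∈ Set.range lam := by
    rw [haa, hspec]; exact hne.csInf_mem hfin
  have ha_le : ∀ i, a ≤ lam i := fun i => by
    rw [haa, hspec]; exact csInf_le hfin.bddBelow ⟨i, rfl⟩
  have hb_ge : ∀ i, lam i ≤ b := fun i => by
    rw [hbb, hspec]; exact le_csSup hfin.bddAbove ⟨i, rfl⟩
  have ha_pos : 0 < a := by
    obtain ⟨j, hj⟩ := ha_mem
    rw [← hj]; exact hMh.eigenvalues_pos j
  have hb_pos : 0 < b := lt_of_lt_of_le ha_pos (le_trans (ha_le (Classical.arbitrary _))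
    (hb_ge (Classical.arbitrary _)))
  set H := w ⬝ᵥ Mh *ᵥ w with hH
  set T := w ⬝ᵥ Mt *ᵥ w with hT
  have hHpos : 0 < H := by
    have := hMh.dotProduct_mulVec_pos hw
    simpa [hH] using this
  have hHlb : a * (w ⬝ᵥ w) ≤ H :=
    (rayleigh_bounds_aux hherm w ha_le hb_ge).1
  -- bound the perturbation
  set v : Fin N → ℝ := fun i => |w i| with hv
  have hvv : v ⬝ᵥ v = w ⬝ᵥ w := by
    simp [dotProduct, hv, abs_mul_abs_self]
  have hvMh : v ⬝ᵥ Mh *ᵥ v ≤ b * (w ⬝ᵥ w) := by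
    rw [← hvv]
    exact (rayleigh_bounds_aux hherm v ha_le hb_ge).2
  have habs : |T - H| ≤ σ * (b * (w ⬝ᵥ w)) := by
    have hTH : T - H = ∑ i, ∑ j, w i * ((Mt i j - Mh i j) * w j) := by
      simp only [hT, hH, dotProduct, Matrix.mulVec, dotProduct,
        Finset.mul_sum, ← Finset.sum_sub_distrib]
      exact Finset.sum_congr rfl fun i _ => Finset.sum_congr rfl fun j _ => by ring
    have step1 : |T - H| ≤ ∑ i, ∑ j, v i * (σ * Mh i j * v j) := by
      rw [hTH]
      refine (Finset.abs_sum_le_sum_abs _ _).trans ?_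
      refine Finset.sum_le_sum fun i _ => ?_
      refine (Finset.abs_sum_le_sum_abs _ _).trans ?_
      refine Finset.sum_le_sum fun j _ => ?_
      rw [abs_mul, abs_mul]
      have h2 : |w i| * (|Mt i j - Mh i j| * |w j|) ≤ |w i| * (σ * Mh i j * |w j|) := by
        apply mul_le_mul_of_nonneg_left _ (abs_nonneg _)
        exact mul_le_mul_of_nonneg_right (hpert i j) (abs_nonneg _)
      have h3 : v i * (σ * Mh i j * v j) = |w i| * (σ * Mh i j * |w j|) := by
        simp only [hv]
      exact h2.trans_eq h3.symm
    have step2 : ∑ i, ∑ j, v i * (σ * Mh i j * v j) = σ * (v ⬝ᵥ Mh *ᵥ v) := by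
      simp only [dotProduct, Matrix.mulVec, Finset.mul_sum]
      congr 1; ext i
      congr 1; ext j; ring
    refine step1.trans ?_
    rw [step2]
    exact mul_le_mul_of_nonneg_left hvMh hσ
  -- conclude
  have hK : σ * b * (w ⬝ᵥ w) ≤ σ * (b / a) * H := by
    have hba : b / a * a = b := div_mul_cancel₀ b (ne_of_gt ha_pos)
    have h1 : σ * (b / a) * (a * (w ⬝ᵥ w)) = σ * b * (w ⬝ᵥ w) := by
      calc σ * (b / a) * (a * (w ⬝ᵥ w)) = σ * (b / a * a) * (w ⬝ᵥ w) := by ring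
        _ = σ * b * (w ⬝ᵥ w) := by rw [hba]
    rw [← h1]
    apply mul_le_mul_of_nonneg_left hHlb
    positivity
  have habs2 : |T - H| ≤ σ * (b / a) * H := by
    refine habs.trans ?_
    calc σ * (b * (w ⬝ᵥ w)) = σ * b * (w ⬝ᵥ w) := by ring
      _ ≤ σ * (b / a) * H := hK
  have hfinal : |T / H - 1| ≤ σ * (b / a) := by
    rw [show T / H - 1 = (T - H) / H by field_simp, abs_div, abs_of_pos hHpos,
      div_le_iff₀ hHpos]
    exact habs2
  obtain ⟨hl, hr⟩ := abs_le.mp hfinal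
  constructor <;> [linarith; linarith]
end

section
/- Let M̂ and M̃ be symmetric positive definite N×N real matrices with M̂ entrywise non-negative, satisfying the entrywise perturbation bound |[M̃]_{i,j} − [M̂]_{i,j}| ≤ σ [M̂]_{i,j} with σ κ(M̂) < 1. Then the condition number of the generalized eigenvalue problem satisfies κ := (max_{w≠0} wᵀM̃w/wᵀM̂w)/(min_{w≠0} wᵀM̃w/wᵀM̂w) ≤ (1 + σ κ(M̂))/(1 − σ κ(M̂)). -/
open Matrix

lemma quad_repr {N : ℕ} {A : Matrix (Fin N) (Fin N) ℝ} (hA : A.IsHermitian) (w : Fin N → ℝ) :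
    ∃ v : Fin N → ℝ, (w ⬝ᵥ A.mulVec w = ∑ i, hA.eigenvalues i * (v i)^2) ∧
      (w ⬝ᵥ w = ∑ i, (v i)^2) := by
  classical
  set U : Matrix (Fin N) (Fin N) ℝ := (hA.eigenvectorUnitary : Matrix (Fin N) (Fin N) ℝ) with hU
  refine ⟨w ᵥ* U, ?_, ?_⟩
  · conv_lhs => rw [hA.spectral_theorem, Unitary.conjStarAlgAut_apply]
    change w ⬝ᵥ (U * diagonal _ * star U) *ᵥ w = _
    have hstar : star U = Uᵀ := rfl
    simp only [← mulVec_mulVec, dotProduct_mulVec (v := w) (A := U), hstar,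
      mulVec_transpose]
    rw [show (diagonal (RCLike.ofReal ∘ hA.eigenvalues) : Matrix (Fin N) (Fin N) ℝ) =
      diagonal hA.eigenvalues from rfl]
    simp [dotProduct, mulVec_diagonal, Finset.mul_sum]
    ring_nf
    congr 1; ext i; ring
  · have h1 : U * star U = 1 := (Matrix.mem_unitaryGroup_iff).mp hA.eigenvectorUnitary.2
    have : (w ᵥ* U) ⬝ᵥ (w ᵥ* U) = w ⬝ᵥ ((U * star U) *ᵥ w) := by
      have hstar : star U = Uᵀ := rfl
      rw [← mulVec_mulVec, dotProduct_mulVec (v := w) (A := U), hstar, mulVec_transpose]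
    rw [show (∑ i, ((w ᵥ* U) i)^2) = (w ᵥ* U) ⬝ᵥ (w ᵥ* U) by simp [dotProduct, sq]]
    rw [this, h1, one_mulVec]

lemma quad_bounds {N : ℕ} {A : Matrix (Fin N) (Fin N) ℝ} (hA : A.IsHermitian) (w : Fin N → ℝ)
    {a b : ℝ} (ha : ∀ i, a ≤ hA.eigenvalues i) (hb : ∀ i, hA.eigenvalues i ≤ b) :
    a * (w ⬝ᵥ w) ≤ w ⬝ᵥ A.mulVec w ∧ w ⬝ᵥ A.mulVec w ≤ b * (w ⬝ᵥ w) := by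
  obtain ⟨v, h1, h2⟩ := quad_repr hA w
  rw [h1, h2, Finset.mul_sum, Finset.mul_sum]
  constructor
  · exact Finset.sum_le_sum fun i _ => mul_le_mul_of_nonneg_right (ha i) (sq_nonneg _)
  · exact Finset.sum_le_sum fun i _ => mul_le_mul_of_nonneg_right (hb i) (sq_nonneg _)

/-- Under the entrywise perturbation bound with `σ κ(M̂) < 1`, the generalized condition number
`(max_w wᵀM̃w/wᵀM̂w)/(min_w wᵀM̃w/wᵀM̂w)` is bounded by `(1 + σκ(M̂))/(1 − σκ(M̂))`. -/
theorem generalized_cond_perturbation {N : ℕ}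
    (Mh Mt : Matrix (Fin N) (Fin N) ℝ) (hMh : Mh.PosDef) (hMt : Mt.PosDef)
    (hnn : ∀ i j, 0 ≤ Mh i j) (σ : ℝ) (hσ : 0 ≤ σ)
    (hpert : ∀ i j, |Mt i j - Mh i j| ≤ σ * Mh i j)
    (hcond : σ * (sSup (spectrum ℝ Mh) / sInf (spectrum ℝ Mh)) < 1) :
    sSup {x : ℝ | ∃ w : Fin N → ℝ, w ≠ 0 ∧
        x = (w ⬝ᵥ Mt.mulVec w) / (w ⬝ᵥ Mh.mulVec w)} /
      sInf {x : ℝ | ∃ w : Fin N → ℝ, w ≠ 0 ∧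
        x = (w ⬝ᵥ Mt.mulVec w) / (w ⬝ᵥ Mh.mulVec w)} ≤
      (1 + σ * (sSup (spectrum ℝ Mh) / sInf (spectrum ℝ Mh))) /
        (1 - σ * (sSup (spectrum ℝ Mh) / sInf (spectrum ℝ Mh))) := by
  classical
  set t : ℝ := σ * (sSup (spectrum ℝ Mh) / sInf (spectrum ℝ Mh)) with ht
  set S : Set ℝ := {x : ℝ | ∃ w : Fin N → ℝ, w ≠ 0 ∧
        x = (w ⬝ᵥ Mt.mulVec w) / (w ⬝ᵥ Mh.mulVec w)} with hS
  have hH : Mh.IsHermitian := hMh.1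
  have hspec : spectrum ℝ Mh = Set.range hH.eigenvalues := hH.spectrum_real_eq_range_eigenvalues
  rcases Nat.eq_zero_or_pos N with hN | hN
  · -- N = 0 : everything is degenerate
    subst hN
    have hSe : S = ∅ := by
      ext x; simp only [hS, Set.mem_setOf_eq, Set.mem_empty_iff_false, iff_false]
      rintro ⟨w, hw, -⟩
      exact hw (Subsingleton.elim _ _)
    have hre : Set.range hH.eigenvalues = ∅ := by
      simp [Set.range_eq_empty]
    have ht0 : t = 0 := by
      rw [ht, hspec, hre, Real.sSup_empty, Real.sInf_empty]
      simp
    rw [hSe, Real.sSup_empty, Real.sInf_empty, ht0]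
    norm_num
  · have : Nonempty (Fin N) := ⟨⟨0, hN⟩⟩
    set lmax : ℝ := sSup (spectrum ℝ Mh) with hlmax
    set lmin : ℝ := sInf (spectrum ℝ Mh) with hlmin
    have hfin : (Set.range hH.eigenvalues).Finite := Set.finite_range _
    have hne : (Set.range hH.eigenvalues).Nonempty := Set.range_nonempty _
    have hub : ∀ i, hH.eigenvalues i ≤ lmax := fun i => by
      rw [hlmax, hspec]; exact le_csSup hfin.bddAbove (Set.mem_range_self i)
    have hlb : ∀ i, lmin ≤ hH.eigenvalues i := fun i => by
      rw [hlmin, hspec]; exact csInf_le hfin.bddBelow (Set.mem_range_self i)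
    have heigpos : ∀ i, 0 < hH.eigenvalues i := fun i => hMh.eigenvalues_pos i
    have hminpos : 0 < lmin := by
      have : lmin ∈ Set.range hH.eigenvalues := by
        rw [hlmin, hspec]; exact hne.csInf_mem hfin
      obtain ⟨i, hi⟩ := this
      rw [← hi]; exact heigpos i
    have hmaxpos : 0 < lmax := lt_of_lt_of_le hminpos (le_trans (hlb ⟨0, hN⟩) (hub ⟨0, hN⟩))
    have ht0 : 0 ≤ t := mul_nonneg hσ (div_nonneg hmaxpos.le hminpos.le)
    have ht1 : t < 1 := hcond
    -- every element of S lies in [1 - t, 1 + t]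
    have hmem : ∀ x ∈ S, 1 - t ≤ x ∧ x ≤ 1 + t := by
      rintro x ⟨w, hw, rfl⟩
      have hww : 0 < w ⬝ᵥ w := by
        have h0 : w ⬝ᵥ w = ∑ i, (w i)^2 := by simp [dotProduct, sq]
        obtain ⟨i, hi⟩ := Function.ne_iff.mp hw
        rw [h0]
        exact Finset.sum_pos' (fun j _ => sq_nonneg _) ⟨i, Finset.mem_univ i, pow_pos (abs_pos.mpr hi) 2 |>.trans_eq (by rw [sq_abs])⟩
      have hd : 0 < w ⬝ᵥ Mh.mulVec w := by
        have := hMh.dotProduct_mulVec_pos hw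
        simpa using this
      have hdlb : lmin * (w ⬝ᵥ w) ≤ w ⬝ᵥ Mh.mulVec w := (quad_bounds hH w hlb hub).1
      -- bound the perturbation term
      set u : Fin N → ℝ := fun i => |w i| with hu
      have hub2 : u ⬝ᵥ Mh.mulVec u ≤ lmax * (u ⬝ᵥ u) := (quad_bounds hH u hlb hub).2
      have huu : u ⬝ᵥ u = w ⬝ᵥ w := by
        simp [dotProduct, hu, abs_mul_abs_self]
      have hDelta : |w ⬝ᵥ (Mt - Mh).mulVec w| ≤ σ * (u ⬝ᵥ Mh.mulVec u) := by
        have hexp : w ⬝ᵥ (Mt - Mh).mulVec w = ∑ i, ∑ j, w i * ((Mt - Mh) i j * w j) := by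
          simp [dotProduct, mulVec, Finset.mul_sum]
        rw [hexp]
        calc |∑ i, ∑ j, w i * ((Mt - Mh) i j * w j)|
            ≤ ∑ i, |∑ j, w i * ((Mt - Mh) i j * w j)| := Finset.abs_sum_le_sum_abs _ _
          _ ≤ ∑ i, ∑ j, |w i * ((Mt - Mh) i j * w j)| :=
              Finset.sum_le_sum fun i _ => Finset.abs_sum_le_sum_abs _ _
          _ ≤ ∑ i, ∑ j, |w i| * (σ * Mh i j * |w j|) := by
              refine Finset.sum_le_sum fun i _ => Finset.sum_le_sum fun j _ => ?_
              rw [abs_mul, abs_mul]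
              refine mul_le_mul_of_nonneg_left ?_ (abs_nonneg _)
              exact mul_le_mul_of_nonneg_right (by simpa using hpert i j) (abs_nonneg _)
          _ = σ * (u ⬝ᵥ Mh.mulVec u) := by
              simp [dotProduct, mulVec, Finset.mul_sum, hu]
              congr 1; ext i; congr 1; ext j; ring
      have hDelta2 : |w ⬝ᵥ (Mt - Mh).mulVec w| ≤ σ * lmax * (w ⬝ᵥ w) := by
        calc |w ⬝ᵥ (Mt - Mh).mulVec w| ≤ σ * (u ⬝ᵥ Mh.mulVec u) := hDelta
          _ ≤ σ * (lmax * (u ⬝ᵥ u)) := mul_le_mul_of_nonneg_left hub2 hσ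
          _ = σ * lmax * (w ⬝ᵥ w) := by rw [huu]; ring
      have hsub : w ⬝ᵥ (Mt - Mh).mulVec w = w ⬝ᵥ Mt.mulVec w - w ⬝ᵥ Mh.mulVec w := by
        simp [sub_mulVec, dotProduct_sub]
      -- key ratio bound
      have hratio : |w ⬝ᵥ Mt.mulVec w / (w ⬝ᵥ Mh.mulVec w) - 1| ≤ t := by
        rw [show w ⬝ᵥ Mt.mulVec w / (w ⬝ᵥ Mh.mulVec w) - 1
            = (w ⬝ᵥ Mt.mulVec w - w ⬝ᵥ Mh.mulVec w) / (w ⬝ᵥ Mh.mulVec w) by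
          field_simp]
        rw [abs_div, abs_of_pos hd, div_le_iff₀ hd]
        calc |w ⬝ᵥ Mt.mulVec w - w ⬝ᵥ Mh.mulVec w| = |w ⬝ᵥ (Mt - Mh).mulVec w| := by
              rw [hsub]
          _ ≤ σ * lmax * (w ⬝ᵥ w) := hDelta2
          _ ≤ t * (w ⬝ᵥ Mh.mulVec w) := by
              rw [ht]
              calc σ * lmax * (w ⬝ᵥ w) = σ * (lmax / lmin) * (lmin * (w ⬝ᵥ w)) := by
                    field_simp
                _ ≤ σ * (lmax / lmin) * (w ⬝ᵥ Mh.mulVec w) := by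
                    refine mul_le_mul_of_nonneg_left hdlb ?_
                    exact mul_nonneg hσ (div_nonneg hmaxpos.le hminpos.le)
      rw [abs_le] at hratio
      constructor <;> linarith [hratio.1, hratio.2]
    have hSne : S.Nonempty := by
      refine ⟨(fun _ => (1:ℝ)) ⬝ᵥ Mt.mulVec (fun _ => 1) / ((fun _ => (1:ℝ)) ⬝ᵥ Mh.mulVec (fun _ => 1)),
        fun _ => 1, ?_, rfl⟩
      intro h
      have h2 := congrFun h ⟨0, hN⟩
      simp at h2
    have hbddA : BddAbove S := ⟨1 + t, fun x hx => (hmem x hx).2⟩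
    have hbddB : BddBelow S := ⟨1 - t, fun x hx => (hmem x hx).1⟩
    have hsup : sSup S ≤ 1 + t := csSup_le hSne fun x hx => (hmem x hx).2
    have hinf : 1 - t ≤ sInf S := le_csInf hSne fun x hx => (hmem x hx).1
    exact div_le_div₀ (by linarith) hsup (by linarith) hinf
end

section
/- Let M be symmetric positive definite, D = diag(M), and D̂ a positive diagonal matrix with D̂ = diag(M̂) for a symmetric positive definite M̂. Define 𝓜 = D^{1/2} D̂^{-1/2} M̂ D̂^{-1/2} D^{1/2}. Then λ_min(𝓜) ≥ λ_min(M) λ_min(M̂)/λ_max(M̂) and λ_max(𝓜) ≤ λ_max(M) λ_max(M̂)/λ_min(M̂). -/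
open Matrix Pointwise

variable {N : ℕ}

lemma unit_eigvec_dot {A : Matrix (Fin N) (Fin N) ℝ} (hA : A.IsHermitian) (i : Fin N) :
    (⇑(hA.eigenvectorBasis i) : Fin N → ℝ) ⬝ᵥ ⇑(hA.eigenvectorBasis i) = 1 := by
  have h := hA.eigenvectorBasis.orthonormal.1 i
  have h2 : (inner ℝ (hA.eigenvectorBasis i) (hA.eigenvectorBasis i) : ℝ) = 1 := by
    rw [real_inner_self_eq_norm_sq, h]; norm_num
  rw [← h2, PiLp.inner_apply]
  simp only [RCLike.inner_apply, conj_trivial, dotProduct]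

lemma spectrum_ge_of_quad {A : Matrix (Fin N) (Fin N) ℝ} (hA : A.IsHermitian) {c : ℝ}
    (h : ∀ x : Fin N → ℝ, c * (x ⬝ᵥ x) ≤ x ⬝ᵥ (A *ᵥ x)) :
    ∀ μ ∈ spectrum ℝ A, c ≤ μ := by
  intro μ hμ
  rw [hA.spectrum_real_eq_range_eigenvalues] at hμ
  obtain ⟨i, rfl⟩ := hμ
  have hv := unit_eigvec_dot hA i
  have he := hA.eigenvalues_eq i
  simp only [star_trivial, RCLike.re_to_real] at he
  calc c = c * ((⇑(hA.eigenvectorBasis i) : Fin N → ℝ) ⬝ᵥ ⇑(hA.eigenvectorBasis i)) := by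
        rw [hv, mul_one]
    _ ≤ (⇑(hA.eigenvectorBasis i) : Fin N → ℝ) ⬝ᵥ (A *ᵥ ⇑(hA.eigenvectorBasis i)) := h _
    _ = hA.eigenvalues i := by rw [he]

lemma quad_of_spectrum_ge {A : Matrix (Fin N) (Fin N) ℝ} (hA : A.IsHermitian) {c : ℝ}
    (h : ∀ μ ∈ spectrum ℝ A, c ≤ μ) :
    ∀ x : Fin N → ℝ, c * (x ⬝ᵥ x) ≤ x ⬝ᵥ (A *ᵥ x) := by
  have hB : (A - c • 1).IsHermitian := by
    have h1 : Aᵀ = A := by simpa using hA.eq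
    simp [Matrix.IsHermitian, Matrix.conjTranspose_sub, Matrix.conjTranspose_smul, h1]
  have hBev : ∀ j, 0 ≤ hB.eigenvalues j := by
    intro j
    have hmem := hB.eigenvalues_mem_spectrum_real (𝕜 := ℝ) j
    have hsp : spectrum ℝ (A - c • (1 : Matrix (Fin N) (Fin N) ℝ)) = spectrum ℝ A - ({c} : Set ℝ) := by
      rw [spectrum.sub_singleton_eq, Algebra.algebraMap_eq_smul_one]
    rw [hsp, Set.mem_sub] at hmem
    obtain ⟨μ, hμ, ν, hν, hsub⟩ := hmem
    rw [Set.mem_singleton_iff] at hν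
    subst hν
    rw [← hsub]
    linarith [h μ hμ]
  have hpsd := hB.posSemidef_iff_eigenvalues_nonneg.mpr hBev
  intro x
  have h0 := hpsd.dotProduct_mulVec_nonneg x
  simp only [star_trivial, Matrix.sub_mulVec, Matrix.smul_mulVec, Matrix.one_mulVec,
    dotProduct_sub, dotProduct_smul, smul_eq_mul] at h0
  linarith

lemma quad_of_spectrum_le {A : Matrix (Fin N) (Fin N) ℝ} (hA : A.IsHermitian) {c : ℝ}
    (h : ∀ μ ∈ spectrum ℝ A, μ ≤ c) :
    ∀ x : Fin N → ℝ, x ⬝ᵥ (A *ᵥ x) ≤ c * (x ⬝ᵥ x) := by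
  have h' : ∀ μ ∈ spectrum ℝ (-A), -c ≤ μ := by
    intro μ hμ
    rw [← spectrum.neg_eq, Set.mem_neg] at hμ
    linarith [h _ hμ]
  intro x
  have h2 := quad_of_spectrum_ge hA.neg h' x
  simp only [Matrix.neg_mulVec, dotProduct_neg] at h2
  linarith

lemma spectrum_le_of_quad {A : Matrix (Fin N) (Fin N) ℝ} (hA : A.IsHermitian) {c : ℝ}
    (h : ∀ x : Fin N → ℝ, x ⬝ᵥ (A *ᵥ x) ≤ c * (x ⬝ᵥ x)) :
    ∀ μ ∈ spectrum ℝ A, μ ≤ c := by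
  intro μ hμ
  have h' : ∀ x : Fin N → ℝ, (-c) * (x ⬝ᵥ x) ≤ x ⬝ᵥ ((-A) *ᵥ x) := by
    intro x
    have := h x
    simp only [Matrix.neg_mulVec, dotProduct_neg]
    linarith
  have := spectrum_ge_of_quad hA.neg h' (-μ) (by rw [← spectrum.neg_eq]; exact Set.neg_mem_neg.mpr hμ)
  linarith

lemma dot_single_self (A : Matrix (Fin N) (Fin N) ℝ) (i : Fin N) :
    (Pi.single i 1 : Fin N → ℝ) ⬝ᵥ (A *ᵥ Pi.single i 1) = A i i := by
  simp [dotProduct, mulVec, Pi.single_apply, Finset.mul_sum]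

lemma single_dot_single (i : Fin N) :
    (Pi.single i 1 : Fin N → ℝ) ⬝ᵥ (Pi.single i 1 : Fin N → ℝ) = 1 := by
  simp [dotProduct, Pi.single_apply]

lemma quad_diag_conj (d : Fin N → ℝ) (B : Matrix (Fin N) (Fin N) ℝ) (x : Fin N → ℝ) :
    x ⬝ᵥ ((diagonal d * B * diagonal d) *ᵥ x)
      = (fun i => d i * x i) ⬝ᵥ (B *ᵥ fun i => d i * x i) := by
  rw [← mulVec_mulVec, ← mulVec_mulVec]
  have h1 : diagonal d *ᵥ x = fun i => d i * x i := by
    ext i; rw [mulVec_diagonal]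
  rw [h1]
  simp only [dotProduct]
  apply Finset.sum_congr rfl
  intro i _
  rw [mulVec_diagonal]
  ring

lemma spectrum_nonempty' {A : Matrix (Fin N) (Fin N) ℝ} (hA : A.IsHermitian) (hN : 0 < N) :
    (spectrum ℝ A).Nonempty := by
  haveI : Nonempty (Fin N) := ⟨⟨0, hN⟩⟩
  rw [hA.spectrum_real_eq_range_eigenvalues]
  exact Set.range_nonempty _

lemma spectrum_pos' {A : Matrix (Fin N) (Fin N) ℝ} (hA : A.PosDef) :
    ∀ μ ∈ spectrum ℝ A, 0 < μ := by
  intro μ hμ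
  rw [hA.1.spectrum_real_eq_range_eigenvalues] at hμ
  obtain ⟨i, rfl⟩ := hμ
  exact hA.eigenvalues_pos i

/-- For the preconditioner `𝓜 = D^{1/2} D̂^{-1/2} M̂ D̂^{-1/2} D^{1/2}` (with `D = diag M`,
`D̂ = diag M̂`, both SPD), `λ_min(𝓜) ≥ λ_min(M) λ_min(M̂)/λ_max(M̂)` and
`λ_max(𝓜) ≤ λ_max(M) λ_max(M̂)/λ_min(M̂)`. -/
theorem preconditioner_eigenvalue_bounds {N : ℕ}
    (M Mh : Matrix (Fin N) (Fin N) ℝ) (hM : M.PosDef) (hMh : Mh.PosDef) :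
    let Dsqrt : Matrix (Fin N) (Fin N) ℝ := Matrix.diagonal fun i => Real.sqrt (M i i)
    let DhInvSqrt : Matrix (Fin N) (Fin N) ℝ :=
      Matrix.diagonal fun i => (Real.sqrt (Mh i i))⁻¹
    let 𝓜 := Dsqrt * DhInvSqrt * Mh * DhInvSqrt * Dsqrt
    sInf (spectrum ℝ M) * sInf (spectrum ℝ Mh) / sSup (spectrum ℝ Mh) ≤ sInf (spectrum ℝ 𝓜) ∧
    sSup (spectrum ℝ 𝓜) ≤ sSup (spectrum ℝ M) * sSup (spectrum ℝ Mh) / sInf (spectrum ℝ Mh) := by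
  intro Dsqrt DhInvSqrt 𝓜
  rcases Nat.eq_zero_or_pos N with hN | hN
  · subst hN
    haveI : Subsingleton (Matrix (Fin 0) (Fin 0) ℝ) := ⟨fun a b => by ext i j; exact i.elim0⟩
    have hsub : ∀ (A : Matrix (Fin 0) (Fin 0) ℝ), spectrum ℝ A = ∅ := by
      intro A
      ext μ
      simp [spectrum.mem_iff, isUnit_of_subsingleton]
    simp [hsub, Real.sInf_empty, Real.sSup_empty]
  · haveI hFin : Nonempty (Fin N) := ⟨⟨0, hN⟩⟩
    set d : Fin N → ℝ := fun i => Real.sqrt (M i i) * (Real.sqrt (Mh i i))⁻¹ with hd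
    have h𝓜 : 𝓜 = diagonal d * Mh * diagonal d := by
      have h1 : Dsqrt * DhInvSqrt = diagonal d := by
        show Matrix.diagonal _ * Matrix.diagonal _ = _
        rw [diagonal_mul_diagonal]
      have h2 : DhInvSqrt * Dsqrt = diagonal d := by
        show Matrix.diagonal _ * Matrix.diagonal _ = _
        rw [diagonal_mul_diagonal]
        exact congrArg diagonal (funext fun i => mul_comm _ _)
      show Dsqrt * DhInvSqrt * Mh * DhInvSqrt * Dsqrt = _
      rw [mul_assoc (Dsqrt * DhInvSqrt * Mh), h2, h1]
    have hdiagH : (diagonal d)ᴴ = diagonal d := by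
      simp [Matrix.diagonal_conjTranspose]
    have h𝓜H : 𝓜.IsHermitian := by
      rw [h𝓜]
      have h3 := Matrix.isHermitian_mul_mul_conjTranspose (diagonal d) hMh.1
      rwa [hdiagH] at h3
    -- spectrum endpoints
    set a := sInf (spectrum ℝ M) with ha
    set A' := sSup (spectrum ℝ M) with hA'
    set b := sInf (spectrum ℝ Mh) with hb
    set B' := sSup (spectrum ℝ Mh) with hB'
    have hneM := spectrum_nonempty' hM.1 hN
    have hneMh := spectrum_nonempty' hMh.1 hN
    have hfinM : (spectrum ℝ M).Finite := M.finite_real_spectrum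
    have hfinMh : (spectrum ℝ Mh).Finite := Mh.finite_real_spectrum
    have ha_mem : a ∈ spectrum ℝ M := hneM.csInf_mem hfinM
    have hb_mem : b ∈ spectrum ℝ Mh := hneMh.csInf_mem hfinMh
    have hB'_mem : B' ∈ spectrum ℝ Mh := hneMh.csSup_mem hfinMh
    have ha_lb : ∀ μ ∈ spectrum ℝ M, a ≤ μ := fun μ h => csInf_le hfinM.bddBelow h
    have hA'_ub : ∀ μ ∈ spectrum ℝ M, μ ≤ A' := fun μ h => le_csSup hfinM.bddAbove h
    have hb_lb : ∀ μ ∈ spectrum ℝ Mh, b ≤ μ := fun μ h => csInf_le hfinMh.bddBelow h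
    have hB'_ub : ∀ μ ∈ spectrum ℝ Mh, μ ≤ B' := fun μ h => le_csSup hfinMh.bddAbove h
    have ha_pos : 0 < a := spectrum_pos' hM a ha_mem
    have hb_pos : 0 < b := spectrum_pos' hMh b hb_mem
    have hB'_pos : 0 < B' := spectrum_pos' hMh B' hB'_mem
    have hA'_pos : 0 < A' := lt_of_lt_of_le ha_pos (ha_lb A' (hneM.csSup_mem hfinM) |>.trans (le_refl _) |> fun h => h)
    -- diagonal entry bounds
    have hMd_lb : ∀ i, a ≤ M i i := by
      intro i
      have h4 := quad_of_spectrum_ge hM.1 ha_lb (Pi.single i 1)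
      rwa [dot_single_self, single_dot_single, mul_one] at h4
    have hMd_ub : ∀ i, M i i ≤ A' := by
      intro i
      have h4 := quad_of_spectrum_le hM.1 hA'_ub (Pi.single i 1)
      rwa [dot_single_self, single_dot_single, mul_one] at h4
    have hMhd_lb : ∀ i, b ≤ Mh i i := by
      intro i
      have h4 := quad_of_spectrum_ge hMh.1 hb_lb (Pi.single i 1)
      rwa [dot_single_self, single_dot_single, mul_one] at h4
    have hMhd_ub : ∀ i, Mh i i ≤ B' := by
      intro i
      have h4 := quad_of_spectrum_le hMh.1 hB'_ub (Pi.single i 1)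
      rwa [dot_single_self, single_dot_single, mul_one] at h4
    have hMhd_pos : ∀ i, 0 < Mh i i := fun i => lt_of_lt_of_le hb_pos (hMhd_lb i)
    have hMd_pos : ∀ i, 0 < M i i := fun i => lt_of_lt_of_le ha_pos (hMd_lb i)
    have hd2 : ∀ i, d i ^ 2 = M i i * (Mh i i)⁻¹ := by
      intro i
      rw [hd]
      simp only []
      rw [mul_pow, inv_pow, Real.sq_sqrt (hMd_pos i).le, Real.sq_sqrt (hMhd_pos i).le]
    have hd2_lb : ∀ i, a * B'⁻¹ ≤ d i ^ 2 := by
      intro i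
      rw [hd2 i]
      have hinv : B'⁻¹ ≤ (Mh i i)⁻¹ := inv_anti₀ (hMhd_pos i) (hMhd_ub i)
      exact mul_le_mul (hMd_lb i) hinv (inv_nonneg.mpr hB'_pos.le) (hMd_pos i).le
    have hd2_ub : ∀ i, d i ^ 2 ≤ A' * b⁻¹ := by
      intro i
      rw [hd2 i]
      have hinv : (Mh i i)⁻¹ ≤ b⁻¹ := inv_anti₀ hb_pos (hMhd_lb i)
      exact mul_le_mul (hMd_ub i) hinv (inv_nonneg.mpr (hMhd_pos i).le) hA'_pos.le
    -- quadratic form of 𝓜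
    have hquad : ∀ x : Fin N → ℝ,
        x ⬝ᵥ (𝓜 *ᵥ x) = (fun i => d i * x i) ⬝ᵥ (Mh *ᵥ fun i => d i * x i) := by
      intro x
      rw [h𝓜, quad_diag_conj]
    have hxx_nonneg : ∀ x : Fin N → ℝ, 0 ≤ x ⬝ᵥ x :=
      fun x => Finset.sum_nonneg fun i _ => mul_self_nonneg (x i)
    have hyy_lb : ∀ x : Fin N → ℝ,
        a * B'⁻¹ * (x ⬝ᵥ x) ≤ (fun i => d i * x i) ⬝ᵥ (fun i => d i * x i) := by
      intro x
      simp only [dotProduct, Finset.mul_sum]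
      apply Finset.sum_le_sum
      intro i _
      nlinarith [hd2_lb i, mul_self_nonneg (x i), sq_nonneg (d i)]
    have hyy_ub : ∀ x : Fin N → ℝ,
        (fun i => d i * x i) ⬝ᵥ (fun i => d i * x i) ≤ A' * b⁻¹ * (x ⬝ᵥ x) := by
      intro x
      simp only [dotProduct, Finset.mul_sum]
      apply Finset.sum_le_sum
      intro i _
      nlinarith [hd2_ub i, mul_self_nonneg (x i), sq_nonneg (d i)]
    have hlow_quad : ∀ x : Fin N → ℝ, (a * b / B') * (x ⬝ᵥ x) ≤ x ⬝ᵥ (𝓜 *ᵥ x) := by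
      intro x
      rw [hquad x]
      have h5 := quad_of_spectrum_ge hMh.1 hb_lb (fun i => d i * x i)
      have h6 := hyy_lb x
      calc (a * b / B') * (x ⬝ᵥ x) = b * (a * B'⁻¹ * (x ⬝ᵥ x)) := by
            rw [div_eq_mul_inv]; ring
        _ ≤ b * ((fun i => d i * x i) ⬝ᵥ (fun i => d i * x i)) :=
            mul_le_mul_of_nonneg_left h6 hb_pos.le
        _ ≤ _ := h5
    have hupp_quad : ∀ x : Fin N → ℝ, x ⬝ᵥ (𝓜 *ᵥ x) ≤ (A' * B' / b) * (x ⬝ᵥ x) := by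
      intro x
      rw [hquad x]
      have h5 := quad_of_spectrum_le hMh.1 hB'_ub (fun i => d i * x i)
      have h6 := hyy_ub x
      calc (fun i => d i * x i) ⬝ᵥ (Mh *ᵥ fun i => d i * x i)
          ≤ B' * ((fun i => d i * x i) ⬝ᵥ (fun i => d i * x i)) := h5
        _ ≤ B' * (A' * b⁻¹ * (x ⬝ᵥ x)) := mul_le_mul_of_nonneg_left h6 hB'_pos.le
        _ = (A' * B' / b) * (x ⬝ᵥ x) := by rw [div_eq_mul_inv]; ring
    constructor
    · exact le_csInf (spectrum_nonempty' h𝓜H hN)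
        (spectrum_ge_of_quad h𝓜H hlow_quad)
    · exact csSup_le (spectrum_nonempty' h𝓜H hN)
        (spectrum_le_of_quad h𝓜H hupp_quad)
end
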